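/- arXiv:1202.0127 — 5 statements merged into one kernel-verified Lean document; each statement's English description precedes it below -/
import Mathlib

section
/- Let f : [a,b] → ℝ be continuous with 0 ≤ a < b < ∞, let k > 1, and let p, q > 0. If |f|^(k/(k-1)) is quasi-convex on [a,b], then ∫_a^b (x-a)^p (b-x)^q f(x) dx ≤ (b-a)^(p+q+1) · [B(kp+1, kq+1)]^(1/k) · (max{|f(a)|^(k/(k-1)), |f(b)|^(k/(k-1))})^((k-1)/k). -/
noncomputable def eulerBeta (x y : ℝ) : ℝ :=
  ∫ t in (0:ℝ)..1, t ^ (x - 1) * (1 - t) ^ (y - 1)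

-- auxiliary: Hölder step on [0,1]
lemma beta_holder (p q k : ℝ) (hp : 0 < p) (hq : 0 < q) (hk : 1 < k) :
    eulerBeta (p + 1) (q + 1) ≤ (eulerBeta (k * p + 1) (k * q + 1)) ^ (1 / k) := by
  have hk0 : (0:ℝ) < k := lt_trans one_pos hk
  set μ : MeasureTheory.Measure ℝ := MeasureTheory.volume.restrict (Set.Ioc (0:ℝ) 1) with hμ
  set g : ℝ → ℝ := fun t => t ^ p * (1 - t) ^ q with hg
  have contg : Continuous g :=
    ((Real.continuous_rpow_const hp.le).comp continuous_id).mul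
      ((Real.continuous_rpow_const hq.le).comp (continuous_const.sub continuous_id))
  have hpq : Real.HolderConjugate k (k / (k - 1)) :=
    (Real.holderConjugate_iff_eq_conjExponent hk).2 rfl
  have hfin : MeasureTheory.IsFiniteMeasure μ := by
    rw [hμ]
    infer_instance
  have hmemg : MeasureTheory.MemLp g (ENNReal.ofReal k) μ :=
    MeasureTheory.MemLp.of_bound contg.aestronglyMeasurable 1 (by
      rw [hμ]
      refine (MeasureTheory.ae_restrict_iff' measurableSet_Ioc).2 ?_
      filter_upwards with t ht
      have h0t : 0 < t := ht.1
      have ht1 : t ≤ 1 := ht.2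
      have h1 : t ^ p ≤ 1 := Real.rpow_le_one h0t.le ht1 hp.le
      have h2 : (1 - t) ^ q ≤ 1 := Real.rpow_le_one (by linarith) (by linarith) hq.le
      have h1' : 0 ≤ t ^ p := Real.rpow_nonneg h0t.le _
      have h2' : 0 ≤ (1 - t) ^ q := Real.rpow_nonneg (by linarith) _
      rw [Real.norm_of_nonneg (mul_nonneg h1' h2')]
      calc t ^ p * (1 - t) ^ q ≤ 1 * 1 := mul_le_mul h1 h2 h2' zero_le_one
      _ = 1 := one_mul 1)
  have hmem1 : MeasureTheory.MemLp (fun _ : ℝ => (1:ℝ)) (ENNReal.ofReal (k / (k-1))) μ :=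
    MeasureTheory.memLp_const 1
  have hgnn : 0 ≤ᵐ[μ] g := by
    rw [hμ]
    refine (MeasureTheory.ae_restrict_iff' measurableSet_Ioc).2 ?_
    filter_upwards with t ht
    exact mul_nonneg (Real.rpow_nonneg ht.1.le _) (Real.rpow_nonneg (by linarith [ht.2]) _)
  have H := MeasureTheory.integral_mul_le_Lp_mul_Lq_of_nonneg hpq hgnn
    (Filter.Eventually.of_forall fun _ => zero_le_one) hmemg hmem1
  have e1 : eulerBeta (p + 1) (q + 1) = ∫ t, g t ∂μ := by
    rw [hμ, eulerBeta, intervalIntegral.integral_of_le zero_le_one]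
    simp only [add_sub_cancel_right]
    rfl
  have e2 : ∫ t, g t ^ k ∂μ = eulerBeta (k * p + 1) (k * q + 1) := by
    rw [hμ, eulerBeta, intervalIntegral.integral_of_le zero_le_one]
    simp only [add_sub_cancel_right]
    apply MeasureTheory.setIntegral_congr_fun measurableSet_Ioc
    intro t ht
    simp only [hg]
    rw [Real.mul_rpow (Real.rpow_nonneg ht.1.le _) (Real.rpow_nonneg (by linarith [ht.2]) _),
      ← Real.rpow_mul ht.1.le, ← Real.rpow_mul (by linarith [ht.2] : (0:ℝ) ≤ 1 - t),
      mul_comm p k, mul_comm q k]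
  have e3 : ∫ _t, (1:ℝ) ^ (k / (k - 1)) ∂μ = 1 := by
    simp [hμ, Real.one_rpow, Real.volume_Ioc]
  calc eulerBeta (p + 1) (q + 1) = ∫ t, g t * 1 ∂μ := by simp [e1]
  _ ≤ (∫ t, g t ^ k ∂μ) ^ (1 / k) * (∫ _t, (1:ℝ) ^ (k / (k - 1)) ∂μ) ^ (1 / (k / (k - 1))) := H
  _ = (eulerBeta (k * p + 1) (k * q + 1)) ^ (1 / k) := by
    rw [e2, e3, Real.one_rpow, mul_one]

theorem stmt2 (a b p q k : ℝ) (f : ℝ → ℝ) (ha : 0 ≤ a) (hab : a < b)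
    (hf : ContinuousOn f (Set.Icc a b)) (hk : 1 < k) (hp : 0 < p) (hq : 0 < q)
    (hqc : ∀ x ∈ Set.Icc a b, ∀ y ∈ Set.Icc a b, ∀ t ∈ Set.Icc (0:ℝ) 1,
      |f (t * x + (1 - t) * y)| ^ (k / (k - 1)) ≤
        max (|f x| ^ (k / (k - 1))) (|f y| ^ (k / (k - 1)))) :
    ∫ x in a..b, (x - a) ^ p * (b - x) ^ q * f x ≤
      (b - a) ^ (p + q + 1) * (eulerBeta (k * p + 1) (k * q + 1)) ^ (1 / k) *
        (max (|f a| ^ (k / (k - 1))) (|f b| ^ (k / (k - 1)))) ^ ((k - 1) / k) := by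
  have hba : 0 < b - a := sub_pos.mpr hab
  have hk0 : (0:ℝ) < k := lt_trans one_pos hk
  have hk1 : 0 < k - 1 := sub_pos.mpr hk
  set K : ℝ := k / (k - 1) with hK
  set M : ℝ := max (|f a| ^ K) (|f b| ^ K) with hM
  have hM0 : 0 ≤ M := le_trans (Real.rpow_nonneg (abs_nonneg _) _) (le_max_left _ _)
  set C : ℝ := M ^ ((k - 1) / k) with hC
  have hC0 : 0 ≤ C := Real.rpow_nonneg hM0 _
  have contp : Continuous (fun x : ℝ => (x - a) ^ p) :=
    (Real.continuous_rpow_const hp.le).comp (continuous_id.sub continuous_const)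
  have contq : Continuous (fun x : ℝ => (b - x) ^ q) :=
    (Real.continuous_rpow_const hq.le).comp (continuous_const.sub continuous_id)
  have contw : Continuous (fun x : ℝ => (x - a) ^ p * (b - x) ^ q) := contp.mul contq
  -- pointwise bound on f
  have hbound : ∀ x ∈ Set.Icc a b, f x ≤ C := by
    intro x hx
    obtain ⟨hax, hxb⟩ := hx
    set t : ℝ := (b - x) / (b - a) with htdef
    have ht : t ∈ Set.Icc (0:ℝ) 1 := by
      constructor
      · exact div_nonneg (by linarith) hba.le
      · rw [div_le_one hba]; linarith
    have h1 : t * (b - a) = b - x := div_mul_cancel₀ _ hba.ne'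
    have hx' : t * a + (1 - t) * b = x := by linarith [h1]
    have hQ := hqc a ⟨le_refl a, hab.le⟩ b ⟨hab.le, le_refl b⟩ t ht
    rw [hx'] at hQ
    calc f x ≤ |f x| := le_abs_self _
    _ = (|f x| ^ K) ^ ((k - 1) / k) := by
        rw [← Real.rpow_mul (abs_nonneg _),
          show K * ((k - 1) / k) = 1 by rw [hK]; field_simp, Real.rpow_one]
    _ ≤ C := Real.rpow_le_rpow (Real.rpow_nonneg (abs_nonneg _) _) hQ (by positivity)
  -- step B
  have hInt1 : IntervalIntegrable (fun x => (x - a) ^ p * (b - x) ^ q * f x)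
      MeasureTheory.volume a b := by
    apply ContinuousOn.intervalIntegrable
    rw [Set.uIcc_of_le hab.le]
    exact contw.continuousOn.mul hf
  have hstepB : ∫ x in a..b, (x - a) ^ p * (b - x) ^ q * f x ≤
      ∫ x in a..b, (x - a) ^ p * (b - x) ^ q * C := by
    apply intervalIntegral.integral_mono_on hab.le hInt1
      ((contw.mul continuous_const).intervalIntegrable a b)
    intro x hx
    have h1 : 0 ≤ (x - a) ^ p := Real.rpow_nonneg (by linarith [hx.1]) _
    have h2 : 0 ≤ (b - x) ^ q := Real.rpow_nonneg (by linarith [hx.2]) _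
    exact mul_le_mul_of_nonneg_left (hbound x hx) (mul_nonneg h1 h2)
  -- step C: substitution
  have hsub : ∫ x in a..b, (x - a) ^ p * (b - x) ^ q =
      (b - a) ^ (p + q + 1) * eulerBeta (p + 1) (q + 1) := by
    have h := intervalIntegral.integral_comp_mul_add
      (fun x => (x - a) ^ p * (b - x) ^ q) (a := 0) (b := 1) hba.ne' a
    simp only [mul_zero, zero_add, mul_one, smul_eq_mul] at h
    have hend : b - a + a = b := by ring
    rw [hend] at h
    have h2 : (∫ t in (0:ℝ)..1, ((b - a) * t + a - a) ^ p * (b - ((b - a) * t + a)) ^ q) =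
        (b - a) ^ p * (b - a) ^ q * eulerBeta (p + 1) (q + 1) := by
      rw [eulerBeta, ← intervalIntegral.integral_const_mul]
      apply intervalIntegral.integral_congr
      intro t ht
      rw [Set.uIcc_of_le zero_le_one] at ht
      have ht0 : 0 ≤ t := ht.1
      have ht1 : t ≤ 1 := ht.2
      have e1 : (b - a) * t + a - a = (b - a) * t := by ring
      have e2 : b - ((b - a) * t + a) = (b - a) * (1 - t) := by ring
      simp only
      rw [e1, e2, Real.mul_rpow hba.le ht0, Real.mul_rpow hba.le (by linarith),
        add_sub_cancel_right, add_sub_cancel_right]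
      ring
    rw [h2] at h
    have hI : (∫ x in a..b, (x - a) ^ p * (b - x) ^ q) =
        (b - a) * ((b - a) ^ p * (b - a) ^ q * eulerBeta (p + 1) (q + 1)) := by
      rw [h, ← mul_assoc, mul_inv_cancel₀ hba.ne', one_mul]
    rw [hI, show p + q + 1 = p + (q + 1) by ring, Real.rpow_add hba, Real.rpow_add hba,
      Real.rpow_one]
    ring
  -- assemble
  have hB := beta_holder p q k hp hq hk
  have hBnn : 0 ≤ (b - a) ^ (p + q + 1) := Real.rpow_nonneg hba.le _
  calc ∫ x in a..b, (x - a) ^ p * (b - x) ^ q * f x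
      ≤ ∫ x in a..b, (x - a) ^ p * (b - x) ^ q * C := hstepB
    _ = (∫ x in a..b, (x - a) ^ p * (b - x) ^ q) * C := by
        rw [← intervalIntegral.integral_mul_const]
    _ = (b - a) ^ (p + q + 1) * eulerBeta (p + 1) (q + 1) * C := by rw [hsub]
    _ ≤ (b - a) ^ (p + q + 1) * (eulerBeta (k * p + 1) (k * q + 1)) ^ (1 / k) * C := by
        apply mul_le_mul_of_nonneg_right _ hC0
        exact mul_le_mul_of_nonneg_left hB hBnn
    _ = (b - a) ^ (p + q + 1) * (eulerBeta (k * p + 1) (k * q + 1)) ^ (1 / k) * M ^ ((k - 1) / k) := rfl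
end

section
/- Let f : [a,b] → ℝ be continuous with 0 ≤ a < b < ∞, let l ≥ 1, and let p, q > 0. If |f|^l is quasi-convex on [a,b], then ∫_a^b (x-a)^p (b-x)^q f(x) dx ≤ (b-a)^(p+q+1) · B(p+1, q+1) · (max{|f(a)|^l, |f(b)|^l})^(1/l). -/
theorem stmt3 (a b p q l : ℝ) (f : ℝ → ℝ) (ha : 0 ≤ a) (hab : a < b)
    (hf : ContinuousOn f (Set.Icc a b)) (hl : 1 ≤ l) (hp : 0 < p) (hq : 0 < q)
    (hqc : ∀ x ∈ Set.Icc a b, ∀ y ∈ Set.Icc a b, ∀ t ∈ Set.Icc (0:ℝ) 1,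
      |f (t * x + (1 - t) * y)| ^ l ≤ max (|f x| ^ l) (|f y| ^ l)) :
    ∫ x in a..b, (x - a) ^ p * (b - x) ^ q * f x ≤
      (b - a) ^ (p + q + 1) * eulerBeta (p + 1) (q + 1) *
        (max (|f a| ^ l) (|f b| ^ l)) ^ (1 / l) := by
  have hba : (0:ℝ) < b - a := by linarith
  have hl0 : l ≠ 0 := by positivity
  set M : ℝ := (max (|f a| ^ l) (|f b| ^ l)) ^ (1 / l) with hM
  have hMnn : 0 ≤ M := Real.rpow_nonneg (le_trans (Real.rpow_nonneg (abs_nonneg _) _)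
    (le_max_left _ _)) _
  -- pointwise bound f x ≤ M on [a,b]
  have hbound : ∀ x ∈ Set.Icc a b, f x ≤ M := by
    intro x hx
    set t : ℝ := (x - a) / (b - a) with ht
    have ht0 : 0 ≤ t := by
      apply div_nonneg _ hba.le; linarith [hx.1]
    have ht1 : t ≤ 1 := by
      rw [div_le_one hba]; linarith [hx.2]
    have hx' : t * b + (1 - t) * a = x := by
      have key : t * (b - a) = x - a := div_mul_cancel₀ _ hba.ne'; linear_combination key
    have h1 := hqc b (Set.right_mem_Icc.2 hab.le) a (Set.left_mem_Icc.2 hab.le) t ⟨ht0, ht1⟩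
    rw [hx', max_comm] at h1
    have h2 : |f x| ≤ M := by
      have : |f x| = (|f x| ^ l) ^ (1 / l) := by
        rw [← Real.rpow_mul (abs_nonneg _), mul_one_div, div_self hl0, Real.rpow_one]
      rw [this, hM]
      exact Real.rpow_le_rpow (Real.rpow_nonneg (abs_nonneg _) _) h1 (by positivity)
    exact le_trans (le_abs_self _) h2
  have hwcont : Continuous fun x : ℝ => (x - a) ^ p * (b - x) ^ q := by
    apply Continuous.mul
    · exact (continuous_id.sub continuous_const).rpow_const fun x => Or.inr hp.le
    · exact (continuous_const.sub continuous_id).rpow_const fun x => Or.inr hq.le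
  have hwnn : ∀ x ∈ Set.Icc a b, 0 ≤ (x - a) ^ p * (b - x) ^ q := by
    intro x hx
    exact mul_nonneg (Real.rpow_nonneg (by linarith [hx.1]) _)
      (Real.rpow_nonneg (by linarith [hx.2]) _)
  have hInt1 : IntervalIntegrable (fun x => (x - a) ^ p * (b - x) ^ q * f x)
      MeasureTheory.volume a b := by
    apply ContinuousOn.intervalIntegrable
    rw [Set.uIcc_of_le hab.le]
    exact (hwcont.continuousOn).mul hf
  have hInt2 : IntervalIntegrable (fun x => (x - a) ^ p * (b - x) ^ q * M)
      MeasureTheory.volume a b :=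
    ((hwcont.mul continuous_const).continuousOn).intervalIntegrable
  have step1 : ∫ x in a..b, (x - a) ^ p * (b - x) ^ q * f x ≤
      ∫ x in a..b, (x - a) ^ p * (b - x) ^ q * M := by
    apply intervalIntegral.integral_mono_on hab.le hInt1 hInt2
    intro x hx
    exact mul_le_mul_of_nonneg_left (hbound x hx) (hwnn x hx)
  -- substitution: compute ∫ weight
  have hsub : ∫ x in a..b, (x - a) ^ p * (b - x) ^ q =
      (b - a) ^ (p + q + 1) * eulerBeta (p + 1) (q + 1) := by
    have h := intervalIntegral.smul_integral_comp_mul_add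
      (fun x => (x - a) ^ p * (b - x) ^ q) (b - a) a (a := 0) (b := 1)
    simp only [mul_zero, zero_add, mul_one] at h
    have hab' : b - a + a = b := by ring
    rw [hab'] at h
    rw [← h]
    have hcongr : ∀ t ∈ Set.uIcc (0:ℝ) 1,
        ((b - a) * t + a - a) ^ p * (b - ((b - a) * t + a)) ^ q =
        (b - a) ^ p * (b - a) ^ q * (t ^ p * (1 - t) ^ q) := by
      intro t htt
      rw [Set.uIcc_of_le zero_le_one] at htt
      have ht0 : 0 ≤ t := htt.1
      have ht1 : 0 ≤ 1 - t := by linarith [htt.2]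
      have e1 : (b - a) * t + a - a = (b - a) * t := by ring
      have e2 : b - ((b - a) * t + a) = (b - a) * (1 - t) := by ring
      rw [e1, e2, Real.mul_rpow hba.le ht0, Real.mul_rpow hba.le ht1]
      ring
    rw [intervalIntegral.integral_congr hcongr]
    rw [intervalIntegral.integral_const_mul]
    have hbeta : eulerBeta (p + 1) (q + 1) = ∫ t in (0:ℝ)..1, t ^ p * (1 - t) ^ q := by
      simp [eulerBeta]
    rw [hbeta, smul_eq_mul]
    rw [show (b - a) ^ (p + q + 1) = (b - a) * ((b - a) ^ p * (b - a) ^ q) by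
      rw [show p + q + 1 = p + (q + 1) by ring, Real.rpow_add hba p (q + 1), Real.rpow_add_one hba.ne' q]; ring]
    ring
  calc ∫ x in a..b, (x - a) ^ p * (b - x) ^ q * f x
      ≤ ∫ x in a..b, (x - a) ^ p * (b - x) ^ q * M := step1
    _ = (∫ x in a..b, (x - a) ^ p * (b - x) ^ q) * M := by
        rw [← intervalIntegral.integral_mul_const]
    _ = (b - a) ^ (p + q + 1) * eulerBeta (p + 1) (q + 1) * M := by rw [hsub]
end

section
/- Let f : [a,b] → ℝ be continuous with 0 ≤ a < b < ∞, and let p, q > 0. If |f| is P-convex on [a,b], then ∫_a^b (x-a)^p (b-x)^q f(x) dx ≤ (b-a)^(p+q+1) · B(p+1, q+1) · (|f(a)| + |f(b)|). -/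
theorem stmt4 (a b p q : ℝ) (f : ℝ → ℝ) (ha : 0 ≤ a) (hab : a < b)
    (hf : ContinuousOn f (Set.Icc a b)) (hp : 0 < p) (hq : 0 < q)
    (hpc : ∀ x ∈ Set.Icc a b, ∀ y ∈ Set.Icc a b, ∀ t ∈ Set.Icc (0:ℝ) 1,
      |f (t * x + (1 - t) * y)| ≤ |f x| + |f y|) :
    ∫ x in a..b, (x - a) ^ p * (b - x) ^ q * f x ≤
      (b - a) ^ (p + q + 1) * eulerBeta (p + 1) (q + 1) * (|f a| + |f b|) := by
  have hba : (0:ℝ) < b - a := sub_pos.2 hab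
  set c := |f a| + |f b| with hc
  have hc0 : 0 ≤ c := by positivity
  set w : ℝ → ℝ := fun x => (x - a) ^ p * (b - x) ^ q with hw
  have hwcont : ContinuousOn w (Set.Icc a b) := by
    apply ContinuousOn.mul
    · exact (continuousOn_id.sub continuousOn_const).rpow_const (fun x hx => Or.inr hp.le)
    · exact (continuousOn_const.sub continuousOn_id).rpow_const (fun x hx => Or.inr hq.le)
  have hw0 : ∀ x ∈ Set.Icc a b, 0 ≤ w x := by
    intro x hx
    exact mul_nonneg (Real.rpow_nonneg (by linarith [hx.1]) p)
      (Real.rpow_nonneg (by linarith [hx.2]) q)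
  have hfb : ∀ x ∈ Set.Icc a b, f x ≤ c := by
    intro x hx
    set t := (x - a) / (b - a) with ht
    have ht0 : 0 ≤ t := div_nonneg (by linarith [hx.1]) hba.le
    have ht1 : t ≤ 1 := (div_le_one hba).2 (by linarith [hx.2])
    have hx' : t * b + (1 - t) * a = x := by
      field_simp [ht]
      rw [show t * b + (1 - t) * a = t * (b - a) + a by ring, ht, div_mul_cancel₀ _ hba.ne', sub_add_cancel]
    have := hpc b ⟨hab.le, le_rfl⟩ a ⟨le_rfl, hab.le⟩ t ⟨ht0, ht1⟩
    rw [hx'] at this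
    calc f x ≤ |f x| := le_abs_self _
      _ ≤ |f b| + |f a| := this
      _ = c := by rw [hc]; ring
  have hI1 : IntervalIntegrable (fun x => w x * f x) MeasureTheory.volume a b := by
    rw [intervalIntegrable_iff_integrableOn_Icc_of_le hab.le]
    exact (hwcont.mul hf).integrableOn_compact isCompact_Icc
  have hI2 : IntervalIntegrable (fun x => w x * c) MeasureTheory.volume a b := by
    rw [intervalIntegrable_iff_integrableOn_Icc_of_le hab.le]
    exact (hwcont.mul continuousOn_const).integrableOn_compact isCompact_Icc
  have step1 : ∫ x in a..b, w x * f x ≤ ∫ x in a..b, w x * c := by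
    apply intervalIntegral.integral_mono_on hab.le hI1 hI2
    intro x hx
    exact mul_le_mul_of_nonneg_left (hfb x hx) (hw0 x hx)
  have key : ∫ x in a..b, w x = (b - a) ^ (p + q + 1) * eulerBeta (p + 1) (q + 1) := by
    have h1 := intervalIntegral.integral_comp_mul_add (a := 0) (b := 1) w (ne_of_gt hba) a
    simp only [mul_zero, zero_add, mul_one, sub_add_cancel] at h1
    have h2 : ∀ t ∈ Set.uIcc (0:ℝ) 1, w ((b - a) * t + a)
        = ((b - a) ^ p * (b - a) ^ q) * (t ^ p * (1 - t) ^ q) := by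
      intro t ht
      rw [Set.uIcc_of_le (zero_le_one)] at ht
      have h3 : (b - a) * t + a - a = (b - a) * t := by ring
      have h4 : b - ((b - a) * t + a) = (b - a) * (1 - t) := by ring
      rw [hw]
      simp only [h3, h4]
      rw [Real.mul_rpow hba.le ht.1, Real.mul_rpow hba.le (by linarith [ht.2])]
      ring
    rw [intervalIntegral.integral_congr h2, intervalIntegral.integral_const_mul] at h1
    have hEB : eulerBeta (p + 1) (q + 1) = ∫ t in (0:ℝ)..1, t ^ p * (1 - t) ^ q := by
      simp [eulerBeta]
    rw [hEB]
    have := h1.symm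
    rw [smul_eq_mul] at this
    calc ∫ x in a..b, w x
        = (b - a) * ((b - a)⁻¹ * ∫ x in a..b, w x) := by field_simp
      _ = (b - a) * ((b - a) ^ p * (b - a) ^ q * ∫ t in (0:ℝ)..1, t ^ p * (1 - t) ^ q) := by
          rw [← this]
      _ = (b - a) ^ (p + q + 1) * ∫ t in (0:ℝ)..1, t ^ p * (1 - t) ^ q := by
          rw [Real.rpow_add hba, Real.rpow_add hba, Real.rpow_one]; ring
  calc ∫ x in a..b, (x - a) ^ p * (b - x) ^ q * f x
      = ∫ x in a..b, w x * f x := by rfl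
    _ ≤ ∫ x in a..b, w x * c := step1
    _ = (∫ x in a..b, w x) * c := by rw [intervalIntegral.integral_mul_const]
    _ = (b - a) ^ (p + q + 1) * eulerBeta (p + 1) (q + 1) * c := by rw [key]
end

section
/- Let f : [a,b] → ℝ be continuous with 0 ≤ a < b < ∞, let k > 1, and let p, q > 0. If |f|^(k/(k-1)) is P-convex on [a,b], then ∫_a^b (x-a)^p (b-x)^q f(x) dx ≤ (b-a)^(p+q+1) · [B(kp+1, kq+1)]^(1/k) · (|f(a)|^(k/(k-1)) + |f(b)|^(k/(k-1)))^((k-1)/k). -/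
theorem stmt5 (a b p q k : ℝ) (f : ℝ → ℝ) (ha : 0 ≤ a) (hab : a < b)
    (hf : ContinuousOn f (Set.Icc a b)) (hk : 1 < k) (hp : 0 < p) (hq : 0 < q)
    (hpc : ∀ x ∈ Set.Icc a b, ∀ y ∈ Set.Icc a b, ∀ t ∈ Set.Icc (0:ℝ) 1,
      |f (t * x + (1 - t) * y)| ^ (k / (k - 1)) ≤
        |f x| ^ (k / (k - 1)) + |f y| ^ (k / (k - 1))) :
    ∫ x in a..b, (x - a) ^ p * (b - x) ^ q * f x ≤
      (b - a) ^ (p + q + 1) * (eulerBeta (k * p + 1) (k * q + 1)) ^ (1 / k) *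
        (|f a| ^ (k / (k - 1)) + |f b| ^ (k / (k - 1))) ^ ((k - 1) / k) := by
  have hba : (0:ℝ) < b - a := sub_pos.2 hab
  have hkpos : (0:ℝ) < k := lt_trans one_pos hk
  have hk1 : (0:ℝ) < k - 1 := sub_pos.2 hk
  set k' : ℝ := k / (k - 1) with hk'def
  have hk'pos : 0 < k' := div_pos hkpos hk1
  set C : ℝ := |f a| ^ k' + |f b| ^ k' with hCdef
  have hC : 0 ≤ C :=
    add_nonneg (Real.rpow_nonneg (abs_nonneg _) _) (Real.rpow_nonneg (abs_nonneg _) _)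
  set M : ℝ := C ^ ((k - 1) / k) with hMdef
  have hM : 0 ≤ M := Real.rpow_nonneg hC _
  have hinv : k'⁻¹ = (k - 1) / k := by rw [hk'def, inv_div]
  -- pointwise bound |f x| ≤ M on [a,b]
  have hbd : ∀ x ∈ Set.Icc a b, |f x| ≤ M := by
    intro x hx
    have ht : (b - x) / (b - a) ∈ Set.Icc (0:ℝ) 1 := by
      constructor
      · exact div_nonneg (sub_nonneg.2 hx.2) hba.le
      · rw [div_le_one hba]; linarith [hx.1]
    have hxeq : ((b - x) / (b - a)) * a + (1 - (b - x) / (b - a)) * b = x := by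
      field_simp
      ring
    have h1 := hpc a (Set.left_mem_Icc.2 hab.le) b (Set.right_mem_Icc.2 hab.le) _ ht
    rw [hxeq] at h1
    calc |f x| = (|f x| ^ k') ^ k'⁻¹ :=
          (Real.rpow_rpow_inv (abs_nonneg _) hk'pos.ne').symm
      _ ≤ C ^ k'⁻¹ := Real.rpow_le_rpow (Real.rpow_nonneg (abs_nonneg _) _) h1
          (inv_nonneg.2 hk'pos.le)
      _ = M := by rw [hinv]
  -- continuity of the weight
  have hFcont : Continuous fun x : ℝ => (x - a) ^ p * (b - x) ^ q := by
    apply Continuous.mul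
    · exact (continuous_id.sub continuous_const).rpow_const fun x => Or.inr hp.le
    · exact (continuous_const.sub continuous_id).rpow_const fun x => Or.inr hq.le
  have hFnn : ∀ x ∈ Set.Icc a b, 0 ≤ (x - a) ^ p * (b - x) ^ q := fun x hx =>
    mul_nonneg (Real.rpow_nonneg (sub_nonneg.2 hx.1) _)
      (Real.rpow_nonneg (sub_nonneg.2 hx.2) _)
  have hint1 : IntervalIntegrable (fun x => (x - a) ^ p * (b - x) ^ q * f x) MeasureTheory.volume a b := by
    apply ContinuousOn.intervalIntegrable
    rw [Set.uIcc_of_le hab.le]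
    exact hFcont.continuousOn.mul hf
  have hint2 : IntervalIntegrable (fun x => (x - a) ^ p * (b - x) ^ q * M) MeasureTheory.volume a b :=
    (hFcont.mul continuous_const).intervalIntegrable a b
  -- step 1: monotonicity
  have hmono : (∫ x in a..b, (x - a) ^ p * (b - x) ^ q * f x) ≤
      ∫ x in a..b, (x - a) ^ p * (b - x) ^ q * M := by
    apply intervalIntegral.integral_mono_on hab.le hint1 hint2
    intro x hx
    exact mul_le_mul_of_nonneg_left ((le_abs_self _).trans (hbd x hx)) (hFnn x hx)
  -- step 2: substitution
  have hsub : (∫ x in a..b, (x - a) ^ p * (b - x) ^ q) =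
      (b - a) ^ (p + q + 1) * ∫ t in (0:ℝ)..1, t ^ p * (1 - t) ^ q := by
    have h0 : (∫ t in (0:ℝ)..1,
        ((b - a) * t + a - a) ^ p * (b - ((b - a) * t + a)) ^ q) =
        (b - a)⁻¹ • ∫ x in a..b, (x - a) ^ p * (b - x) ^ q := by
      rw [intervalIntegral.integral_comp_mul_add (fun x => (x - a) ^ p * (b - x) ^ q)
        hba.ne' a]
      norm_num
    have h1 : (∫ t in (0:ℝ)..1,
        ((b - a) * t + a - a) ^ p * (b - ((b - a) * t + a)) ^ q) =
        ∫ t in (0:ℝ)..1, (b - a) ^ (p + q) * (t ^ p * (1 - t) ^ q) := by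
      apply intervalIntegral.integral_congr
      intro t ht
      rw [Set.uIcc_of_le zero_le_one] at ht
      dsimp only
      have h2 : (b - a) * t + a - a = (b - a) * t := by ring
      have h3 : b - ((b - a) * t + a) = (b - a) * (1 - t) := by ring
      rw [h2, h3, Real.mul_rpow hba.le ht.1, Real.mul_rpow hba.le (by linarith [ht.2]),
        Real.rpow_add hba]
      ring
    rw [h1, intervalIntegral.integral_const_mul, smul_eq_mul] at h0
    have h4 : (∫ x in a..b, (x - a) ^ p * (b - x) ^ q) =
        (b - a) * ((b - a) ^ (p + q) * ∫ t in (0:ℝ)..1, t ^ p * (1 - t) ^ q) := by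
      rw [h0, ← mul_assoc, mul_inv_cancel₀ hba.ne', one_mul]
    rw [h4, Real.rpow_add hba, Real.rpow_add hba, Real.rpow_add hba, Real.rpow_one]
    ring
  -- step 3: Hölder on [0,1]
  have hconj : Real.HolderConjugate k k' := Real.HolderConjugate.conjExponent hk
  have hHolder : (∫ t in (0:ℝ)..1, t ^ p * (1 - t) ^ q) ≤
      (∫ t in (0:ℝ)..1, t ^ (k * p) * (1 - t) ^ (k * q)) ^ (1 / k) := by
    rw [intervalIntegral.integral_of_le zero_le_one,
      intervalIntegral.integral_of_le zero_le_one]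
    set μ := MeasureTheory.volume.restrict (Set.Ioc (0:ℝ) 1) with hμ
    have hfin : MeasureTheory.IsFiniteMeasure μ := by
      constructor
      rw [hμ, MeasureTheory.Measure.restrict_apply_univ, Real.volume_Ioc]
      exact ENNReal.ofReal_lt_top
    have hgc : Continuous fun t : ℝ => t ^ p * (1 - t) ^ q := by
      apply Continuous.mul
      · exact continuous_id.rpow_const fun x => Or.inr hp.le
      · exact (continuous_const.sub continuous_id).rpow_const fun x => Or.inr hq.le
    have hnn1 : 0 ≤ᵐ[μ] fun t : ℝ => t ^ p * (1 - t) ^ q := by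
      filter_upwards [MeasureTheory.ae_restrict_mem measurableSet_Ioc] with t ht
      exact mul_nonneg (Real.rpow_nonneg ht.1.le _)
        (Real.rpow_nonneg (by linarith [ht.2]) _)
    have hnn2 : 0 ≤ᵐ[μ] fun _ : ℝ => (1:ℝ) := Filter.Eventually.of_forall fun _ => zero_le_one
    have hmem1 : MeasureTheory.MemLp (fun t : ℝ => t ^ p * (1 - t) ^ q)
        (ENNReal.ofReal k) μ := by
      apply MeasureTheory.MemLp.of_bound hgc.aestronglyMeasurable 1
      filter_upwards [MeasureTheory.ae_restrict_mem measurableSet_Ioc] with t ht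
      have h1 : t ^ p ≤ 1 := Real.rpow_le_one ht.1.le ht.2 hp.le
      have h2 : (1 - t) ^ q ≤ 1 := Real.rpow_le_one (by linarith [ht.2]) (by linarith [ht.1]) hq.le
      rw [Real.norm_eq_abs, abs_of_nonneg (mul_nonneg (Real.rpow_nonneg ht.1.le _)
        (Real.rpow_nonneg (by linarith [ht.2]) _))]
      exact mul_le_one₀ h1 (Real.rpow_nonneg (by linarith [ht.2]) _) h2
    have hmem2 : MeasureTheory.MemLp (fun _ : ℝ => (1:ℝ)) (ENNReal.ofReal k') μ :=
      MeasureTheory.memLp_const 1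
    have H := MeasureTheory.integral_mul_le_Lp_mul_Lq_of_nonneg hconj hnn1 hnn2 hmem1 hmem2
    simp only [mul_one, Real.one_rpow] at H
    have hμuniv : (∫ _t : ℝ, (1:ℝ) ∂μ) = 1 := by
      rw [MeasureTheory.integral_const, smul_eq_mul, mul_one, hμ, MeasureTheory.measureReal_def,
        MeasureTheory.Measure.restrict_apply_univ, Real.volume_Ioc]
      norm_num
    rw [hμuniv, Real.one_rpow, mul_one] at H
    refine H.trans ?_
    apply le_of_eq
    congr 1
    apply MeasureTheory.setIntegral_congr_fun measurableSet_Ioc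
    intro t ht
    simp only
    rw [Real.mul_rpow (Real.rpow_nonneg ht.1.le _) (Real.rpow_nonneg (by linarith [ht.2]) _),
      ← Real.rpow_mul ht.1.le, ← Real.rpow_mul (by linarith [ht.2] : (0:ℝ) ≤ 1 - t),
      mul_comm p k, mul_comm q k]
  -- step 4: identify eulerBeta
  have hB : eulerBeta (k * p + 1) (k * q + 1) =
      ∫ t in (0:ℝ)..1, t ^ (k * p) * (1 - t) ^ (k * q) := by
    unfold eulerBeta
    simp only [add_sub_cancel_right]
  -- assemble
  calc (∫ x in a..b, (x - a) ^ p * (b - x) ^ q * f x)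
      ≤ ∫ x in a..b, (x - a) ^ p * (b - x) ^ q * M := hmono
    _ = (∫ x in a..b, (x - a) ^ p * (b - x) ^ q) * M := by
        rw [intervalIntegral.integral_mul_const]
    _ = (b - a) ^ (p + q + 1) * (∫ t in (0:ℝ)..1, t ^ p * (1 - t) ^ q) * M := by
        rw [hsub]
    _ ≤ (b - a) ^ (p + q + 1) * (eulerBeta (k * p + 1) (k * q + 1)) ^ (1 / k) * M := by
        rw [hB]
        exact mul_le_mul_of_nonneg_right
          (mul_le_mul_of_nonneg_left hHolder (Real.rpow_nonneg hba.le _)) hM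
end

section
/- Let f : [a,b] → ℝ be continuous with 0 ≤ a < b < ∞, let l > 1, and let p, q > 0. If |f|^l is P-convex on [a,b], then ∫_a^b (x-a)^p (b-x)^q f(x) dx ≤ (b-a)^(p+q+1) · B(p+1, q+1) · (|f(a)|^l + |f(b)|^l)^(1/l). -/
theorem stmt6 (a b p q l : ℝ) (f : ℝ → ℝ) (ha : 0 ≤ a) (hab : a < b)
    (hf : ContinuousOn f (Set.Icc a b)) (hl : 1 < l) (hp : 0 < p) (hq : 0 < q)
    (hpc : ∀ x ∈ Set.Icc a b, ∀ y ∈ Set.Icc a b, ∀ t ∈ Set.Icc (0:ℝ) 1,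
      |f (t * x + (1 - t) * y)| ^ l ≤ |f x| ^ l + |f y| ^ l) :
    ∫ x in a..b, (x - a) ^ p * (b - x) ^ q * f x ≤
      (b - a) ^ (p + q + 1) * eulerBeta (p + 1) (q + 1) *
        (|f a| ^ l + |f b| ^ l) ^ (1 / l) := by
  have hba : (0:ℝ) < b - a := sub_pos.2 hab
  have hl0 : (0:ℝ) < l := lt_trans one_pos hl
  set M : ℝ := (|f a| ^ l + |f b| ^ l) ^ (1 / l) with hM
  have hM0 : 0 ≤ M := Real.rpow_nonneg (by positivity) _
  -- pointwise bound
  have key : ∀ x ∈ Set.Icc a b, f x ≤ M := by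
    intro x hx
    have hx1 : a ≤ x := hx.1
    have hx2 : x ≤ b := hx.2
    set t : ℝ := (x - a) / (b - a) with ht
    have ht01 : t ∈ Set.Icc (0:ℝ) 1 := by
      constructor
      · exact div_nonneg (by linarith) hba.le
      · rw [div_le_one hba]; linarith
    have hxeq : t * b + (1 - t) * a = x := by
      field_simp [ht]
      rw [ht]
      have e : (x - a) / (b - a) * b + (1 - (x - a) / (b - a)) * a = (x - a) / (b - a) * (b - a) + a := by ring
      rw [e, div_mul_cancel₀ _ hba.ne']; ring
    have h1 := hpc b ⟨hab.le, le_refl b⟩ a ⟨le_refl a, hab.le⟩ t ht01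
    rw [hxeq] at h1
    calc f x ≤ |f x| := le_abs_self _
      _ = (|f x| ^ l) ^ (1 / l) := by
          rw [one_div, Real.rpow_rpow_inv (abs_nonneg _) hl0.ne']
      _ ≤ (|f b| ^ l + |f a| ^ l) ^ (1 / l) := by
          apply Real.rpow_le_rpow (by positivity) h1 (by positivity)
      _ = M := by rw [hM, add_comm]
  -- continuity facts
  have hcp : Continuous (fun x : ℝ => (x - a) ^ p) :=
    (Real.continuous_rpow_const hp.le).comp (continuous_id.sub continuous_const)
  have hcq : Continuous (fun x : ℝ => (b - x) ^ q) :=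
    (Real.continuous_rpow_const hq.le).comp (continuous_const.sub continuous_id)
  have hg : Continuous (fun x : ℝ => (x - a) ^ p * (b - x) ^ q) := hcp.mul hcq
  -- nonnegativity of the weight
  have hwnn : ∀ x ∈ Set.Icc a b, 0 ≤ (x - a) ^ p * (b - x) ^ q := by
    intro x hx
    have : (0:ℝ) ≤ x - a := by linarith [hx.1]
    have : (0:ℝ) ≤ b - x := by linarith [hx.2]
    positivity
  -- integrability
  have hint1 : IntervalIntegrable (fun x => (x - a) ^ p * (b - x) ^ q * f x)
      MeasureTheory.volume a b := by
    apply ContinuousOn.intervalIntegrable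
    rw [Set.uIcc_of_le hab.le]
    exact (hg.continuousOn).mul hf
  have hint2 : IntervalIntegrable (fun x => (x - a) ^ p * (b - x) ^ q * M)
      MeasureTheory.volume a b :=
    ((hg.mul continuous_const).continuousOn).intervalIntegrable
  -- the weight integral equals the beta value
  have hsubst : (∫ x in a..b, (x - a) ^ p * (b - x) ^ q)
      = (b - a) ^ (p + q + 1) * eulerBeta (p + 1) (q + 1) := by
    have hderiv : ∀ t ∈ Set.uIcc (0:ℝ) 1,
        HasDerivAt (fun t : ℝ => a + t * (b - a)) (b - a) t := by
      intro t _
      simpa using ((hasDerivAt_id t).mul_const (b - a)).const_add a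
    have h := intervalIntegral.integral_comp_smul_deriv hderiv
      continuousOn_const hg (a := (0:ℝ)) (b := 1)
    simp only [Function.comp, smul_eq_mul, zero_mul, add_zero, one_mul,
      add_sub_cancel] at h
    rw [← h]
    have hcongr : ∀ t ∈ Set.uIcc (0:ℝ) 1,
        (b - a) * ((a + t * (b - a) - a) ^ p * (b - (a + t * (b - a))) ^ q)
        = (b - a) ^ (p + q + 1) * (t ^ ((p+1) - 1) * (1 - t) ^ ((q+1) - 1)) := by
      intro t htm
      rw [Set.uIcc_of_le zero_le_one] at htm
      have ht0 : (0:ℝ) ≤ t := htm.1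
      have ht1 : (0:ℝ) ≤ 1 - t := by linarith [htm.2]
      have e1 : a + t * (b - a) - a = t * (b - a) := by ring
      have e2 : b - (a + t * (b - a)) = (1 - t) * (b - a) := by ring
      rw [e1, e2, Real.mul_rpow ht0 hba.le, Real.mul_rpow ht1 hba.le,
        Real.rpow_add hba, Real.rpow_add hba, Real.rpow_one]
      ring_nf
    rw [intervalIntegral.integral_congr hcongr, intervalIntegral.integral_const_mul]
    rfl
  calc ∫ x in a..b, (x - a) ^ p * (b - x) ^ q * f x
      ≤ ∫ x in a..b, (x - a) ^ p * (b - x) ^ q * M := by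
        apply intervalIntegral.integral_mono_on hab.le hint1 hint2
        intro x hx
        exact mul_le_mul_of_nonneg_left (key x hx) (hwnn x hx)
    _ = (∫ x in a..b, (x - a) ^ p * (b - x) ^ q) * M := by
        rw [intervalIntegral.integral_mul_const]
    _ = (b - a) ^ (p + q + 1) * eulerBeta (p + 1) (q + 1) * M := by rw [hsubst]
end
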